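/- Let X be a separable metric space and let E be an upper semi-continuous decomposition of X, i.e., a partition of X into compact sets that forms an upper semi-continuous collection. Then the quotient space X/E, obtained by collapsing each element of E to a point and equipped with the quotient topology, is a separable metrizable space. -/

import Mathlib

/- ## Common setup: the circle `ℝ/ℤ`, the maps `σ_d`, chords, geodesic laminations -/

noncomputable section

open Set Metric MeasureTheory Filter Topology

/-- The abstract circle `ℝ/ℤ`. -/
abbrev S := AddCircle (1 : ℝ)

instance : Fact ((0 : ℝ) < 1) := ⟨one_pos⟩

/-- The identification of `ℝ/ℤ` with the unit circle in `ℂ`, `θ ↦ e^{2πiθ}`. -/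
noncomputable def toC (x : S) : ℂ := (AddCircle.toCircle x : ℂ)

/-- The angle-multiplication map `σ_d : θ ↦ dθ` (i.e. `z ↦ z^d`). -/
def sig (d : ℕ) (x : S) : S := d • x

/-- The open unit disk `𝔻 ⊆ ℂ`. -/
def openDisk : Set ℂ := Metric.ball 0 1

/-- The closed unit disk `𝔻̄ ⊆ ℂ`. -/
def closedDisk : Set ℂ := Metric.closedBall 0 1

/-- The set of circle points (angles) whose image in `ℂ` lies in `C`. -/
def circPart (C : Set ℂ) : Set S := {a : S | toC a ∈ C}

lemma sym2_setOf_finite (p : Sym2 S) : {a : S | a ∈ p}.Finite := by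
  induction p using Sym2.ind with
  | _ x y =>
    have h : {a : S | a ∈ Sym2.mk x y} ⊆ {x, y} := by
      intro a ha
      rcases Sym2.mem_iff.mp ha with h | h <;> simp [h]
    exact Set.Finite.subset ((Set.finite_singleton y).insert x) h

lemma sym2_setOf_nonempty (p : Sym2 S) : {a : S | a ∈ p}.Nonempty := by
  induction p using Sym2.ind with
  | _ x y => exact ⟨x, Sym2.mem_iff.mpr (Or.inl rfl)⟩

/-- The chord `overline{ab}` of the closed unit disk corresponding to an unordered
pair of circle points: the closed straight segment joining them (degenerate if they agree). -/
def chordOf (p : Sym2 S) : Set ℂ := convexHull ℝ (toC '' {a : S | a ∈ p})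

/-- The endpoints (in `ℂ`) of a chord. -/
def chordEnds (p : Sym2 S) : Set ℂ := toC '' {a : S | a ∈ p}

/-- A critical chord for `σ_d`: a nondegenerate chord whose endpoints have the same `σ_d`-image. -/
def IsCritChord (d : ℕ) (p : Sym2 S) : Prop := ¬ p.IsDiag ∧ (p.map (sig d)).IsDiag

/-- A geodesic lamination: a collection of chords (leaves), pairwise disjoint in the open
unit disk, containing all degenerate chords, whose union is closed. -/
structure GeoLam where
  leaves : Set (Sym2 S)
  diag_mem : ∀ a : S, Sym2.diag a ∈ leaves
  pairwise_unlinked : ∀ p ∈ leaves, ∀ q ∈ leaves, p ≠ q →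
    chordOf p ∩ chordOf q ∩ openDisk = ∅
  closed_plus : IsClosed (⋃ p ∈ leaves, chordOf p)

namespace GeoLam

/-- The union `L⁺` of all leaves of a lamination. -/
def plus (L : GeoLam) : Set ℂ := ⋃ p ∈ L.leaves, chordOf p

/-- Sibling `σ_d`-invariance of a geodesic lamination. -/
def Invariant (d : ℕ) (L : GeoLam) : Prop :=
  (∀ p ∈ L.leaves, p.map (sig d) ∈ L.leaves) ∧
  (∀ p ∈ L.leaves, ∃ q ∈ L.leaves, q.map (sig d) = p) ∧
  (∀ p ∈ L.leaves, ¬ (p.map (sig d)).IsDiag →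
    ∃ f : Fin d → Sym2 S, (∃ i, f i = p) ∧ (∀ i, f i ∈ L.leaves) ∧
      (∀ i, (f i).map (sig d) = p.map (sig d)) ∧
      (∀ i j, i ≠ j → chordOf (f i) ∩ chordOf (f j) = ∅))

/-- A gap of a lamination: the closure of a connected component of `𝔻 ∖ L⁺`. -/
def IsGap (L : GeoLam) (G : Set ℂ) : Prop :=
  ∃ z ∈ openDisk \ L.plus, G = closure (connectedComponentIn (openDisk \ L.plus) z)

end GeoLam

/-- A (nondegenerate) chord that is an edge of the closed set `G`, i.e. lies in its boundary. -/
def IsEdgeChord (G : Set ℂ) (p : Sym2 S) : Prop := ¬ p.IsDiag ∧ chordOf p ⊆ frontier G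

/-- `C` is an edge of `G` (as a set: the chord of some edge of `G`). -/
def IsEdgeSet (G C : Set ℂ) : Prop := ∃ p : Sym2 S, IsEdgeChord G p ∧ C = chordOf p

namespace GeoLam

/-- A critical leaf of `L`, regarded as a subset of the disk. -/
def IsCritLeaf (d : ℕ) (L : GeoLam) (X : Set ℂ) : Prop :=
  ∃ p ∈ L.leaves, IsCritChord d p ∧ X = chordOf p

/-- A critical gap: all edges critical, or some critical chord is contained in the
interior of the gap except for its endpoints. -/
def IsCritGap (d : ℕ) (L : GeoLam) (G : Set ℂ) : Prop :=
  L.IsGap G ∧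
  ((∀ p : Sym2 S, IsEdgeChord G p → (p.map (sig d)).IsDiag) ∨
    ∃ p : Sym2 S, IsCritChord d p ∧ chordOf p \ chordEnds p ⊆ interior G)

/-- A critical set of `L`: a critical leaf or a critical gap. -/
def IsCritSet (d : ℕ) (L : GeoLam) (X : Set ℂ) : Prop :=
  L.IsCritLeaf d X ∨ L.IsCritGap d X

/-- A critical object of `L`: a critical set maximal by inclusion. -/
def IsCritObject (d : ℕ) (L : GeoLam) (X : Set ℂ) : Prop :=
  L.IsCritSet d X ∧ ∀ Y, L.IsCritSet d Y → X ⊆ Y → Y = X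

/-- An all-critical set: a critical leaf or an all-critical gap. -/
def IsAllCritSet (d : ℕ) (L : GeoLam) (X : Set ℂ) : Prop :=
  L.IsCritLeaf d X ∨
    (L.IsGap X ∧ ∀ p : Sym2 S, IsEdgeChord X p → (p.map (sig d)).IsDiag)

/-- An all-critical triangle of the (cubic) lamination `L`. -/
def IsAllCritTriangle (L : GeoLam) (Δ : Set ℂ) : Prop :=
  ∃ a b c : S, a ≠ b ∧ b ≠ c ∧ a ≠ c ∧ sig 3 a = sig 3 b ∧ sig 3 b = sig 3 c ∧
    Δ = convexHull ℝ ({toC a, toC b, toC c} : Set ℂ) ∧ L.IsGap Δ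

end GeoLam

/- ## Laminational equivalence relations -/

/-- A (nondegenerate) laminational equivalence relation on the circle:
closed graph, disjoint convex hulls of distinct classes, finite classes. -/
structure LamEq where
  r : S → S → Prop
  equiv : Equivalence r
  closedGraph : IsClosed {q : S × S | r q.1 q.2}
  disjointHulls : ∀ x y : S, ¬ r x y →
    Disjoint (convexHull ℝ (toC '' {z | r x z})) (convexHull ℝ (toC '' {z | r y z}))
  finiteClasses : ∀ x : S, {y | r x y}.Finite

namespace LamEq

/-- The `∼`-class of a point. -/
def cls (E : LamEq) (x : S) : Set S := {y | E.r x y}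

/-- The convex hull (in `ℂ`) of a class. -/
def classHull (E : LamEq) (x : S) : Set ℂ := convexHull ℝ (toC '' E.cls x)

/-- `σ_d`-invariance of a laminational equivalence relation: classes map onto classes,
and on each class `σ_d` extends to an orientation preserving covering map of the circle
for which the class is the full preimage of its image. -/
def Invariant (d : ℕ) (E : LamEq) : Prop :=
  (∀ x : S, sig d '' E.cls x = E.cls (sig d x)) ∧
  (∀ x : S, ∃ F : S → S, Continuous F ∧ IsCoveringMap F ∧
    (∃ f : ℝ → ℝ, Monotone f ∧ Continuous f ∧ ∀ t : ℝ, ((f t : ℝ) : S) = F ((t : ℝ) : S)) ∧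
    (∀ y ∈ E.cls x, F y = sig d y) ∧
    F ⁻¹' (sig d '' E.cls x) = E.cls x)

end LamEq

/-- `L` is the canonical geodesic lamination `L_∼` generated by `E`: its leaves are all
degenerate chords together with the edges of the convex hulls of all classes. -/
def IsCanonical (E : LamEq) (L : GeoLam) : Prop :=
  L.leaves = {p : Sym2 S | p.IsDiag ∨ ∃ x : S, chordOf p ⊆ frontier (E.classHull x)}

/-- A cubic geodesic lamination is dendritic if it is the canonical lamination of a
`σ₃`-invariant laminational equivalence relation all of whose gaps are finite. -/
def GeoLam.Dendritic (L : GeoLam) : Prop :=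
  ∃ E : LamEq, E.Invariant 3 ∧ IsCanonical E L ∧ ∀ G, L.IsGap G → (circPart G).Finite

/- ## Laminations as points of `𝔠(𝔠(𝔻̄))` -/

/-- A chord as a nonempty compact subset of `ℂ`. -/
noncomputable def chordNC (p : Sym2 S) : TopologicalSpace.NonemptyCompacts ℂ :=
  ⟨⟨chordOf p, ((sym2_setOf_finite p).image toC).isCompact_convexHull ℝ⟩,
    ((sym2_setOf_nonempty p).image toC).convexHull⟩

/-- A geodesic lamination as a collection of compact subsets of the disk, i.e.
as a subset of `𝔠(𝔻̄)`. -/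
def GeoLam.NC (L : GeoLam) : Set (TopologicalSpace.NonemptyCompacts ℂ) := chordNC '' L.leaves

/-- A geodesic lamination is perfect if, as a subset of the hyperspace `𝔠(𝔻̄)` with the
Hausdorff metric, it has no isolated points. -/
def GeoLam.Perfect (L : GeoLam) : Prop :=
  ∀ q ∈ L.NC, q ∈ closure (L.NC \ {q})

/-- Convergence of laminations in `𝔠(𝔠(𝔻̄))` (Hausdorff distance of leaf collections tends to 0). -/
def TendstoLam (Ls : ℕ → GeoLam) (L : GeoLam) : Prop :=
  Tendsto (fun n => EMetric.hausdorffEdist ((Ls n).NC) L.NC) atTop (nhds 0)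

/-- Convergence of compact subsets of `ℂ` in the Hausdorff metric. -/
def TendstoSet (Cs : ℕ → Set ℂ) (C : Set ℂ) : Prop :=
  Tendsto (fun n => EMetric.hausdorffEdist (Cs n) C) atTop (nhds 0)

/- ## Marked (cubic) laminations -/

/-- The condition that `σ_d` is one-to-one on the boundary of each component of
`𝔻̄ ∖ (C ∪ D)`, except at endpoints of critical edges of such components. -/
def MarkedCond (d : ℕ) (C D : Set ℂ) : Prop :=
  ∀ z ∈ closedDisk \ (C ∪ D),
    Set.InjOn (sig d)
      ({a : S | toC a ∈ frontier (connectedComponentIn (closedDisk \ (C ∪ D)) z)} \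
       {a : S | ∃ p : Sym2 S, IsCritChord d p ∧
          chordOf p ⊆ frontier (connectedComponentIn (closedDisk \ (C ∪ D)) z) ∧ a ∈ p})

/-- A marked cubic lamination `(L, C, D)`: a `σ₃`-invariant geodesic lamination together
with two critical sets such that `σ₃` is one-to-one on the boundary of each component of
`𝔻̄ ∖ (C ∪ D)` except at endpoints of critical edges. -/
def MarkedLam (L : GeoLam) (C D : Set ℂ) : Prop :=
  L.Invariant 3 ∧ L.IsCritSet 3 C ∧ L.IsCritSet 3 D ∧ MarkedCond 3 C D

/-- A limit marked lamination: a marked lamination arising as a limit of marked laminations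
with finite critical sets. -/
def IsLimitMarked (L : GeoLam) (C D : Set ℂ) : Prop :=
  MarkedLam L C D ∧
  ∃ (Ls : ℕ → GeoLam) (Cs Ds : ℕ → Set ℂ),
    (∀ n, MarkedLam (Ls n) (Cs n) (Ds n)) ∧
    (∀ n, (circPart (Cs n)).Finite ∧ (circPart (Ds n)).Finite) ∧
    TendstoLam Ls L ∧ TendstoSet Cs C ∧ TendstoSet Ds D

/- ## Co-critical sets and mixed tags -/

/-- `σ₃(C) = CH(σ₃(C ∩ S))` for a set `C = CH(C ∩ S)`. -/
def sigHull (C : Set ℂ) : Set ℂ := convexHull ℝ (toC '' (sig 3 '' circPart C))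

/-- A hole of `C`: a connected component of the complement in `S` of `C ∩ S`. -/
def IsHole (C : Set ℂ) (H : Set S) : Prop :=
  ∃ a : S, a ∉ circPart C ∧ H = connectedComponentIn {b : S | b ∉ circPart C} a

/-- `K` is the co-critical set `co(C)` of `C` (relative to the lamination `L`):
if `C` is the only critical object of `L` then `co(C) = C`; otherwise `C` has a unique
hole `H` of length `> 1/3` and `co(C)` is the convex hull of the points of `H` whose
`σ₃`-images lie in `σ₃(C)`. -/
def IsCo (L : GeoLam) (C K : Set ℂ) : Prop :=
  (L.IsCritObject 3 C ∧ (∀ Y, L.IsCritObject 3 Y → Y = C) ∧ K = C) ∨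
  ((¬ (L.IsCritObject 3 C ∧ ∀ Y, L.IsCritObject 3 Y → Y = C)) ∧
    ∃ H : Set S, IsHole C H ∧ volume H > 1/3 ∧
      (∀ H', IsHole C H' → volume H' > 1/3 → H' = H) ∧
      K = convexHull ℝ (toC '' {a : S | a ∈ H ∧ sig 3 a ∈ sig 3 '' circPart C}))

/-- The mixed tag `co(C¹) × σ₃(C²) ⊆ 𝔻̄ × 𝔻̄`, given the co-critical set `K = co(C¹)`. -/
def mixedTag (K C2 : Set ℂ) : Set (ℂ × ℂ) := K ×ˢ sigHull C2

/-- A marking of a dendritic lamination: an ordering of its critical objects. -/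
def IsDendriticMarking (L : GeoLam) (C1 C2 : Set ℂ) : Prop :=
  L.IsCritObject 3 C1 ∧ L.IsCritObject 3 C2 ∧
  ∀ Y, L.IsCritObject 3 Y → Y = C1 ∨ Y = C2

/- ## Critical quadrilaterals -/

/-- A quadruple of circle points (a candidate quadrilateral). -/
abbrev Quad := Fin 4 → S

/-- Weak circular order of four points `a₀ ≤ a₁ ≤ a₂ ≤ a₃ ≤ a₀`. -/
def Circ4 (x0 x1 x2 x3 : S) : Prop := btw x0 x1 x2 ∧ btw x0 x2 x3

/-- Weak circular order of eight points. -/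
def Circ8 (x0 x1 x2 x3 x4 x5 x6 x7 : S) : Prop :=
  btw x0 x1 x2 ∧ btw x0 x2 x3 ∧ btw x0 x3 x4 ∧ btw x0 x4 x5 ∧ btw x0 x5 x6 ∧ btw x0 x6 x7

/-- A critical quadrilateral for `σ₃`: a circularly ordered quadruple whose two diagonals
(spikes) are critical chords. -/
def IsCritQuad (q : Quad) : Prop :=
  Circ4 (q 0) (q 1) (q 2) (q 3) ∧ sig 3 (q 0) = sig 3 (q 2) ∧ sig 3 (q 1) = sig 3 (q 3)

/-- Two quadrilaterals are equal as critical quadrilaterals if they differ by a cyclic rotation. -/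
def QuadEquiv (q1 q2 : Quad) : Prop := ∃ k : Fin 4, ∀ i, q2 i = q1 (i + k)

/-- Strong linkage: the vertices can be (cyclically) numbered so that they weakly interleave. -/
def StronglyLinked (a b : Quad) : Prop :=
  ∃ k m : Fin 4,
    Circ8 (a k) (b m) (a (k + 1)) (b (m + 1)) (a (k + 2)) (b (m + 2)) (a (k + 3)) (b (m + 3))

/-- The convex hull of a quadrilateral. -/
def quadHull (q : Quad) : Set ℂ := convexHull ℝ (toC '' Set.range q)

/-- The spikes (diagonals) of a critical quadrilateral. -/
def spikes (q : Quad) : Set (Sym2 S) := {Sym2.mk (q 0) (q 2), Sym2.mk (q 1) (q 3)}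

/-- Two critical quadrilaterals share a spike. -/
def ShareSpike (q1 q2 : Quad) : Prop := (spikes q1 ∩ spikes q2).Nonempty

/-- A collapsing quadrilateral: its `σ₃`-image is a nondegenerate leaf. -/
def Collapsing (q : Quad) : Prop := sig 3 (q 0) ≠ sig 3 (q 1)

/-- `X` is a leaf or a gap of `L`. -/
def IsLeafOrGap (L : GeoLam) (X : Set ℂ) : Prop :=
  (∃ p ∈ L.leaves, X = chordOf p) ∨ L.IsGap X

/-- A quadratically critical portrait of `L`: a pair of distinct critical quadrilaterals
that are leaves or gaps of `L`. -/
def IsQCP (L : GeoLam) (q1 q2 : Quad) : Prop :=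
  IsCritQuad q1 ∧ IsCritQuad q2 ∧ ¬ QuadEquiv q1 q2 ∧
  IsLeafOrGap L (quadHull q1) ∧ IsLeafOrGap L (quadHull q2)

/-- Two laminations share the same all-critical triangle. -/
def ShareAllCritTriangle (L1 L2 : GeoLam) : Prop :=
  ∃ Δ : Set ℂ, L1.IsAllCritTriangle Δ ∧ L2.IsAllCritTriangle Δ

/-- Laminations with quadratically critical portraits are linked or essentially equal. -/
def PortraitsLinkedOrEssEq (L1 : GeoLam) (q11 q12 : Quad) (L2 : GeoLam) (q21 q22 : Quad) : Prop :=
  (StronglyLinked q11 q21 ∧ StronglyLinked q12 q22) ∨ ShareAllCritTriangle L1 L2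

/-- Laminations with quadratically critical portraits are essentially equal. -/
def PortraitsEssEq (L1 : GeoLam) (q11 q12 : Quad) (L2 : GeoLam) (q21 q22 : Quad) : Prop :=
  (StronglyLinked q11 q21 ∧ ShareSpike q11 q21 ∧
    StronglyLinked q12 q22 ∧ ShareSpike q12 q22) ∨ ShareAllCritTriangle L1 L2

/-- A quadrilateral shares a pair of opposite edges with the set `C`. -/
def SharesOppEdges (q : Quad) (C : Set ℂ) : Prop :=
  (chordOf (Sym2.mk (q 0) (q 1)) ⊆ frontier C ∧ chordOf (Sym2.mk (q 2) (q 3)) ⊆ frontier C) ∨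
  (chordOf (Sym2.mk (q 1) (q 2)) ⊆ frontier C ∧ chordOf (Sym2.mk (q 3) (q 0)) ⊆ frontier C)

/-- Marked laminations (and their critical patterns) are linked or essentially equal:
there are tunings `L_i^m ⊇ L_i` with quadratically critical portraits `Q_iʲ ⊆ C_iʲ`
(collapsing ones sharing a pair of opposite edges with `C_iʲ`) that are linked or
essentially equal. -/
def MarkedLinkedOrEssEq (L1 : GeoLam) (C11 C12 : Set ℂ) (L2 : GeoLam) (C21 C22 : Set ℂ) : Prop :=
  ∃ (L1m L2m : GeoLam) (q11 q12 q21 q22 : Quad),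
    L1.leaves ⊆ L1m.leaves ∧ L2.leaves ⊆ L2m.leaves ∧
    L1m.Invariant 3 ∧ L2m.Invariant 3 ∧
    IsQCP L1m q11 q12 ∧ IsQCP L2m q21 q22 ∧
    quadHull q11 ⊆ C11 ∧ quadHull q12 ⊆ C12 ∧ quadHull q21 ⊆ C21 ∧ quadHull q22 ⊆ C22 ∧
    (Collapsing q11 → SharesOppEdges q11 C11) ∧ (Collapsing q12 → SharesOppEdges q12 C12) ∧
    (Collapsing q21 → SharesOppEdges q21 C21) ∧ (Collapsing q22 → SharesOppEdges q22 C22) ∧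
    PortraitsLinkedOrEssEq L1m q11 q12 L2m q21 q22

/-- Marked laminations (and their critical patterns) are essentially equal. -/
def MarkedEssEq (L1 : GeoLam) (C11 C12 : Set ℂ) (L2 : GeoLam) (C21 C22 : Set ℂ) : Prop :=
  ∃ (L1m L2m : GeoLam) (q11 q12 q21 q22 : Quad),
    L1.leaves ⊆ L1m.leaves ∧ L2.leaves ⊆ L2m.leaves ∧
    L1m.Invariant 3 ∧ L2m.Invariant 3 ∧
    IsQCP L1m q11 q12 ∧ IsQCP L2m q21 q22 ∧
    quadHull q11 ⊆ C11 ∧ quadHull q12 ⊆ C12 ∧ quadHull q21 ⊆ C21 ∧ quadHull q22 ⊆ C22 ∧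
    (Collapsing q11 → SharesOppEdges q11 C11) ∧ (Collapsing q12 → SharesOppEdges q12 C12) ∧
    (Collapsing q21 → SharesOppEdges q21 C21) ∧ (Collapsing q22 → SharesOppEdges q22 C22) ∧
    PortraitsEssEq L1m q11 q12 L2m q21 q22


/-- Let `X` be a separable metric space and let `E` be an upper
semi-continuous decomposition of `X` into compact sets. Then the quotient space `X/E`,
with the quotient topology, is a separable metrizable space. -/
theorem usc_decomposition_quotient_metrizable
    {X : Type*} [MetricSpace X] [TopologicalSpace.SeparableSpace X]
    (E : Set (Set X))
    (hcomp : ∀ A ∈ E, IsCompact A)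
    (hdisj : ∀ A ∈ E, ∀ B ∈ E, A ≠ B → Disjoint A B)
    (hcover : ∀ x : X, ∃ A ∈ E, x ∈ A)
    (husc : ∀ A ∈ E, ∀ U : Set X, IsOpen U → A ⊆ U →
      ∃ V : Set X, IsOpen V ∧ A ⊆ V ∧ ∀ B ∈ E, (B ∩ V).Nonempty → B ⊆ U) :
    TopologicalSpace.SeparableSpace (Quot (fun x y : X => ∃ A ∈ E, x ∈ A ∧ y ∈ A)) ∧
    TopologicalSpace.MetrizableSpace (Quot (fun x y : X => ∃ A ∈ E, x ∈ A ∧ y ∈ A)) := by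
  classical
  set r : X → X → Prop := fun x y => ∃ A ∈ E, x ∈ A ∧ y ∈ A with hr_def
  -- uniqueness of members
  have hmem_eq : ∀ {A B : Set X}, A ∈ E → B ∈ E → ∀ {x : X}, x ∈ A → x ∈ B → A = B := by
    intro A B hA hB x hxA hxB
    by_contra h
    exact Set.disjoint_left.mp (hdisj A hA B hB h) hxA hxB
  have hequiv : Equivalence r := by
    constructor
    · intro x; obtain ⟨A, hA, hx⟩ := hcover x; exact ⟨A, hA, hx, hx⟩
    · rintro x y ⟨A, hA, hx, hy⟩; exact ⟨A, hA, hy, hx⟩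
    · rintro x y z ⟨A, hA, hx, hy⟩ ⟨B, hB, hy', hz⟩
      refine ⟨A, hA, hx, ?_⟩
      rw [hmem_eq hA hB hy hy']; exact hz
  set q : X → Quot r := Quot.mk r with hq_def
  have hqm : Topology.IsQuotientMap q := isQuotientMap_quot_mk
  have hqeq : ∀ x y : X, q x = q y ↔ r x y := by
    intro x y
    rw [hq_def, Quot.eq]
    exact hequiv.eqvGen_iff
  -- the "saturated interior" operation
  set star : Set X → Set X := fun U => {x | ∃ A ∈ E, x ∈ A ∧ A ⊆ U} with hstar_def
  have hstar_subset : ∀ U : Set X, star U ⊆ U := by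
    rintro U x ⟨A, _, hxA, hAU⟩; exact hAU hxA
  have hstar_open : ∀ U : Set X, IsOpen U → IsOpen (star U) := by
    intro U hU
    rw [isOpen_iff_forall_mem_open]
    rintro x ⟨A, hA, hxA, hAU⟩
    obtain ⟨V, hVopen, hAV, hV⟩ := husc A hA U hU hAU
    refine ⟨V, ?_, hVopen, hAV hxA⟩
    intro y hyV
    obtain ⟨B, hB, hyB⟩ := hcover y
    exact ⟨B, hB, hyB, hV B hB ⟨y, hyB, hyV⟩⟩
  have hstar_sat : ∀ (U : Set X) (x y : X), r x y → x ∈ star U → y ∈ star U := by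
    rintro U x y ⟨A, hA, hxA, hyA⟩ ⟨B, hB, hxB, hBU⟩
    exact ⟨A, hA, hyA, (hmem_eq hA hB hxA hxB) ▸ hBU⟩
  have hmem_star : ∀ (U : Set X) (A : Set X), A ∈ E → A ⊆ U → A ⊆ star U := by
    intro U A hA hAU a ha; exact ⟨A, hA, ha, hAU⟩
  -- preimage of image of a saturated set
  have hsat_pre : ∀ U : Set X, q ⁻¹' (q '' star U) = star U := by
    intro U
    apply Set.Subset.antisymm
    · rintro x ⟨y, hy, hxy⟩
      exact hstar_sat U y x (hequiv.symm ((hqeq x y).mp hxy.symm)) hy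
    · intro x hx; exact ⟨x, hx, rfl⟩
  have hopen_im : ∀ U : Set X, IsOpen U → IsOpen (q '' star U) := by
    intro U hU
    rw [← hqm.isOpen_preimage, hsat_pre]
    exact hstar_open U hU
  -- images of disjoint star-sets are disjoint
  have hdisj_im : ∀ U V : Set X, Disjoint U V → Disjoint (q '' star U) (q '' star V) := by
    intro U V hUV
    rw [Set.disjoint_left]
    rintro c hcU hcV
    obtain ⟨z, rfl⟩ := Quot.exists_rep c
    have hz1 : z ∈ star U := by rw [← hsat_pre U]; exact hcU
    have hz2 : z ∈ star V := by rw [← hsat_pre V]; exact hcV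
    exact Set.disjoint_left.mp hUV (hstar_subset U hz1) (hstar_subset V hz2)
  -- Hausdorff
  haveI ht2 : T2Space (Quot r) := by
    constructor
    intro a b hab
    obtain ⟨x, rfl⟩ := Quot.exists_rep a
    obtain ⟨y, rfl⟩ := Quot.exists_rep b
    obtain ⟨A, hA, hxA⟩ := hcover x
    obtain ⟨B, hB, hyB⟩ := hcover y
    have hAB : A ≠ B := by
      rintro rfl
      exact hab ((hqeq x y).mpr ⟨A, hA, hxA, hyB⟩)
    obtain ⟨U, V, hUo, hVo, hAU, hBV, hUV⟩ :=
      normal_separation ((hcomp A hA).isClosed) ((hcomp B hB).isClosed) (hdisj A hA B hB hAB)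
    exact ⟨q '' star U, q '' star V, hopen_im U hUo, hopen_im V hVo,
      ⟨x, hmem_star U A hA hAU hxA, rfl⟩, ⟨y, hmem_star V B hB hBV hyB, rfl⟩,
      hdisj_im U V hUV⟩
  -- Regular
  haveI hreg : RegularSpace (Quot r) := by
    apply RegularSpace.of_exists_mem_nhds_isClosed_subset
    intro a s hs
    obtain ⟨x, rfl⟩ := Quot.exists_rep a
    obtain ⟨W, hWs, hWo, hxW⟩ := mem_nhds_iff.mp hs
    -- F := preimage of complement of W: a saturated closed set
    set F : Set X := q ⁻¹' Wᶜ with hF_def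
    have hFc : IsClosed F := (hWo.preimage hqm.continuous).isClosed_compl
    have hFsat : ∀ z : X, z ∈ F → ∀ w : X, r z w → w ∈ F := by
      intro z hz w hzw
      have : q w = q z := (hqeq w z).mpr (hequiv.symm hzw)
      simpa [hF_def, this] using hz
    obtain ⟨A, hA, hxA⟩ := hcover x
    have hAF : Disjoint A F := by
      rw [Set.disjoint_left]
      intro a haA haF
      exact (hFsat a haF x (hequiv.symm ⟨A, hA, hxA, haA⟩)) hxW
    obtain ⟨U, V, hUo, hVo, hAU, hFV, hUV⟩ :=
      normal_separation ((hcomp A hA).isClosed) hFc hAF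
    have hFstar : F ⊆ star V := by
      intro z hz
      obtain ⟨B, hB, hzB⟩ := hcover z
      refine ⟨B, hB, hzB, fun b hb => hFV (hFsat z hz b ⟨B, hB, hzB, hb⟩)⟩
    refine ⟨(q '' star V)ᶜ, ?_, (hopen_im V hVo).isClosed_compl, ?_⟩
    · refine Filter.mem_of_superset ((hopen_im U hUo).mem_nhds
        ⟨x, hmem_star U A hA hAU hxA, rfl⟩) ?_
      exact Set.subset_compl_iff_disjoint_right.mpr (hdisj_im U V hUV)
    · intro c hc
      obtain ⟨z, rfl⟩ := Quot.exists_rep c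
      by_contra hcs
      have hzW : q z ∉ W := fun h => hcs (hWs h)
      exact hc ⟨z, hFstar hzW, rfl⟩
  -- Second countable
  haveI : SecondCountableTopology X := UniformSpace.secondCountable_of_separable X
  haveI hsc : SecondCountableTopology (Quot r) := by
    obtain ⟨b, hbc, -, hbasis⟩ := TopologicalSpace.exists_countable_basis X
    set Bq : Set (Set (Quot r)) :=
      (fun s : Set (Set X) => q '' star (⋃₀ s)) '' {s | s.Finite ∧ s ⊆ b} with hBq_def
    have hBqc : Bq.Countable := (Set.countable_setOf_finite_subset hbc).image _
    refine TopologicalSpace.IsTopologicalBasis.secondCountableTopology (b := Bq) ?_ hBqc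
    apply TopologicalSpace.isTopologicalBasis_of_isOpen_of_nhds
    · rintro u ⟨s, ⟨hsf, hsb⟩, rfl⟩
      exact hopen_im _ (isOpen_sUnion fun t ht => hbasis.isOpen (hsb ht))
    · intro a W ha hW
      obtain ⟨x, rfl⟩ := Quot.exists_rep a
      obtain ⟨A, hA, hxA⟩ := hcover x
      have hUo : IsOpen (q ⁻¹' W) := hW.preimage hqm.continuous
      have hAU : A ⊆ q ⁻¹' W := by
        intro y hy
        have : q y = q x := (hqeq y x).mpr (hequiv.symm ⟨A, hA, hxA, hy⟩)
        rw [Set.mem_preimage, this]; exact ha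
      -- cover the compact A by finitely many basis sets inside q ⁻¹' W
      have hcov : A ⊆ ⋃ v ∈ {v | v ∈ b ∧ v ⊆ q ⁻¹' W}, v := by
        intro y hy
        obtain ⟨v, hvb, hyv, hvU⟩ := hbasis.exists_subset_of_mem_open (hAU hy) hUo
        exact Set.mem_biUnion ⟨hvb, hvU⟩ hyv
      obtain ⟨s, hsb, hsf, hsA⟩ := (hcomp A hA).elim_finite_subcover_image
        (fun v hv => hbasis.isOpen hv.1) hcov
      have hsU : ⋃₀ s ⊆ q ⁻¹' W := by
        rintro y ⟨v, hv, hyv⟩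
        exact (hsb hv).2 hyv
      have hsA' : A ⊆ ⋃₀ s := by
        intro y hy
        simpa [Set.sUnion_eq_biUnion] using hsA hy
      refine ⟨q '' star (⋃₀ s), ⟨s, ⟨hsf, fun v hv => (hsb hv).1⟩, rfl⟩,
        ⟨x, hmem_star _ A hA hsA' hxA, rfl⟩, ?_⟩
      rintro c ⟨z, hz, rfl⟩
      exact hsU (hstar_subset _ hz)
  exact ⟨inferInstance, inferInstance⟩

end
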